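/- One has: (i) range d_0 ⊆ ker d_1; (ii) a function φ ∈ C¹ lies in ker d_1 if and only if φ_0(s_i) = 0 for all 0 ≤ i ≤ n, φ_ℓ(s_i) = φ_ℓ(s_0) for all i and all ℓ ≥ 1, and φ_ℓ(q_i) + φ_ℓ(p_{i+1}) = φ_{ℓ+1}(s_0) for all 0 ≤ i < n and ℓ ≥ 0; (iii) the k-linear map ker d_1 → (ℕ → k) sending φ to the function ℓ ↦ φ_ℓ(q_0) + φ_ℓ(p_1) is surjective with kernel exactly range d_0. Consequently ker d_1 / range d_0 is isomorphic to the space of all functions ℕ → k (this is the computation HH¹(Δ) ≅ k^{ℤ≥0}). -/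
import Mathlib


/-- The index set `S_0 = {e_i : 0 ≤ i ≤ n}`. -/
inductive S0 (n : ℕ) where
  | e (i : Fin (n + 1))

/-- The index set `S_1 = {s_i} ∪ {p_{i+1}} ∪ {q_i}` (here `p i` stands for `p_{i+1}`). -/
inductive S1 (n : ℕ) where
  | s (i : Fin (n + 1))
  | p (i : Fin n)
  | q (i : Fin n)

/-- The index set `S_2`: the ambiguities `P²_{i+1}, Q²_i, sP²_{i+1}, sQ²_i`. -/
inductive S2 (n : ℕ) where
  | P (i : Fin n)
  | Q (i : Fin n)
  | sP (i : Fin n)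
  | sQ (i : Fin n)

/-- `(prev φ) ℓ w = φ_{ℓ−1}(w)` with the convention `φ_{−1} = 0`. -/
def prev {k σ : Type*} [Field k] (φ : ℕ → σ → k) : ℕ → σ → k
  | 0, _ => 0
  | ℓ + 1, w => φ ℓ w

variable (n : ℕ) (k : Type*) [Field k]

/-- The differential `d_0 : C⁰ → C¹`. -/
def d0 (φ : ℕ → S0 n → k) : ℕ → S1 n → k := fun ℓ w =>
  match w with
  | .s _ => 0
  | .p i => φ ℓ (.e i.succ) - φ ℓ (.e i.castSucc)
  | .q i => φ ℓ (.e i.castSucc) - φ ℓ (.e i.succ)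

/-- The differential `d_1 : C¹ → C²`. -/
def d1 (φ : ℕ → S1 n → k) : ℕ → S2 n → k := fun ℓ w =>
  match w with
  | .P i => prev φ ℓ (.p i) + prev φ ℓ (.q i) - φ ℓ (.s i.succ)
  | .Q i => prev φ ℓ (.q i) + prev φ ℓ (.p i) - φ ℓ (.s i.castSucc)
  | .sP i => φ ℓ (.s i.succ) - φ ℓ (.s i.castSucc)
  | .sQ i => φ ℓ (.s i.castSucc) - φ ℓ (.s i.succ)

/-- (i) `range d_0 ⊆ ker d_1`; (ii) `φ ∈ ker d_1` iff `φ_0(s_i) = 0` for all `i`,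
`φ_ℓ(s_i) = φ_ℓ(s_0)` for all `i` and `ℓ ≥ 1`, and `φ_ℓ(q_i) + φ_ℓ(p_{i+1}) = φ_{ℓ+1}(s_0)`
for all `i` and `ℓ ≥ 0`; (iii) the map `ker d_1 → (ℕ → k)`, `φ ↦ (ℓ ↦ φ_ℓ(q_0) + φ_ℓ(p_1))`,
is surjective with kernel exactly `range d_0`.  Consequently
`ker d_1 / range d_0 ≅ (ℕ → k)`, which is the computation `HH¹(Δ) ≅ k^{ℤ≥0}`. -/
theorem HH1_of_diagonal (hn : 0 < n) :
    (∀ φ : ℕ → S0 n → k, d1 n k (d0 n k φ) = fun _ _ => (0 : k)) ∧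
    (∀ φ : ℕ → S1 n → k,
      (d1 n k φ = fun _ _ => (0 : k)) ↔
        ((∀ i : Fin (n + 1), φ 0 (.s i) = 0) ∧
         (∀ (i : Fin (n + 1)) (ℓ : ℕ), φ (ℓ + 1) (.s i) = φ (ℓ + 1) (.s 0)) ∧
         (∀ (i : Fin n) (ℓ : ℕ), φ ℓ (.q i) + φ ℓ (.p i) = φ (ℓ + 1) (.s 0)))) ∧
    (∀ g : ℕ → k, ∃ φ : ℕ → S1 n → k, d1 n k φ = (fun _ _ => (0 : k)) ∧
       ∀ ℓ : ℕ, φ ℓ (.q ⟨0, hn⟩) + φ ℓ (.p ⟨0, hn⟩) = g ℓ) ∧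
    (∀ φ : ℕ → S1 n → k, d1 n k φ = (fun _ _ => (0 : k)) →
       ((∀ ℓ : ℕ, φ ℓ (.q ⟨0, hn⟩) + φ ℓ (.p ⟨0, hn⟩) = 0) ↔
         ∃ ψ : ℕ → S0 n → k, d0 n k ψ = φ)) := by
  have d1P : ∀ (φ : ℕ → S1 n → k) (ℓ) (i : Fin n),
      d1 n k φ ℓ (.P i) = prev φ ℓ (.p i) + prev φ ℓ (.q i) - φ ℓ (.s i.succ) := fun _ _ _ => rfl
  have d1Q : ∀ (φ : ℕ → S1 n → k) (ℓ) (i : Fin n),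
      d1 n k φ ℓ (.Q i) = prev φ ℓ (.q i) + prev φ ℓ (.p i) - φ ℓ (.s i.castSucc) := fun _ _ _ => rfl
  have d1sP : ∀ (φ : ℕ → S1 n → k) (ℓ) (i : Fin n),
      d1 n k φ ℓ (.sP i) = φ ℓ (.s i.succ) - φ ℓ (.s i.castSucc) := fun _ _ _ => rfl
  -- s-constancy from d1 φ = 0
  have key : ∀ φ : ℕ → S1 n → k, d1 n k φ = (fun _ _ => (0:k)) →
      ∀ ℓ (j : Fin (n+1)), φ ℓ (.s j) = φ ℓ (.s 0) := by
    intro φ h ℓ j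
    obtain ⟨m, hm⟩ := j
    have : ∀ m (hm : m ≤ n), φ ℓ (.s ⟨m, Nat.lt_succ_of_le hm⟩) = φ ℓ (.s 0) := by
      intro m hm
      induction m with
      | zero => rfl
      | succ m ih =>
        have hmn : m < n := hm
        have H := congrFun (congrFun h ℓ) (.sP ⟨m, hmn⟩)
        rw [d1sP] at H
        have h1 : φ ℓ (.s (⟨m, hmn⟩ : Fin n).succ) = φ ℓ (.s (⟨m, hmn⟩ : Fin n).castSucc) := by
          have := sub_eq_zero.mp H
          exact this
        have h2 := ih (Nat.le_of_lt hm)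
        calc φ ℓ (.s ⟨m+1, Nat.lt_succ_of_le hm⟩)
            = φ ℓ (.s (⟨m, hmn⟩ : Fin n).succ) := rfl
          _ = φ ℓ (.s (⟨m, hmn⟩ : Fin n).castSucc) := h1
          _ = φ ℓ (.s 0) := h2
    exact this m (Nat.lt_succ_iff.mp hm)
  -- part (ii)
  have part2 : ∀ φ : ℕ → S1 n → k,
      (d1 n k φ = fun _ _ => (0 : k)) ↔
        ((∀ i : Fin (n + 1), φ 0 (.s i) = 0) ∧
         (∀ (i : Fin (n + 1)) (ℓ : ℕ), φ (ℓ + 1) (.s i) = φ (ℓ + 1) (.s 0)) ∧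
         (∀ (i : Fin n) (ℓ : ℕ), φ ℓ (.q i) + φ ℓ (.p i) = φ (ℓ + 1) (.s 0))) := by
    intro φ
    constructor
    · intro h
      refine ⟨?_, fun i ℓ => key φ h (ℓ+1) i, ?_⟩
      · intro i
        have H := congrFun (congrFun h 0) (.Q ⟨0, hn⟩)
        rw [d1Q] at H
        simp only [prev] at H
        have h0 : φ 0 (.s ((⟨0, hn⟩ : Fin n).castSucc)) = 0 := by linear_combination -H
        have : ((⟨0, hn⟩ : Fin n).castSucc) = (0 : Fin (n+1)) := rfl
        rw [this] at h0
        rw [key φ h 0 i, h0]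
      · intro i ℓ
        have H := congrFun (congrFun h (ℓ+1)) (.Q i)
        rw [d1Q] at H
        simp only [prev] at H
        have := sub_eq_zero.mp H
        rw [this, key φ h (ℓ+1) i.castSucc]
    · rintro ⟨c1, c2, c3⟩
      funext ℓ w
      cases w with
      | P i =>
        rw [d1P]
        cases ℓ with
        | zero => simp only [prev]; rw [c1 i.succ]; ring
        | succ ℓ => simp only [prev]; rw [c2 i.succ, ← c3 i ℓ]; ring
      | Q i =>
        rw [d1Q]
        cases ℓ with
        | zero => simp only [prev]; rw [c1 i.castSucc]; ring
        | succ ℓ => simp only [prev]; rw [c2 i.castSucc, ← c3 i ℓ]; ring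
      | sP i =>
        show φ ℓ (.s i.succ) - φ ℓ (.s i.castSucc) = 0
        cases ℓ with
        | zero => rw [c1 i.succ, c1 i.castSucc]; ring
        | succ ℓ => rw [c2 i.succ, c2 i.castSucc]; ring
      | sQ i =>
        show φ ℓ (.s i.castSucc) - φ ℓ (.s i.succ) = 0
        cases ℓ with
        | zero => rw [c1 i.succ, c1 i.castSucc]; ring
        | succ ℓ => rw [c2 i.succ, c2 i.castSucc]; ring
  refine ⟨?_, part2, ?_, ?_⟩
  -- part (i)
  · intro φ
    have : d1 n k (d0 n k φ) = fun _ _ => (0 : k) := by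
      rw [part2]
      refine ⟨fun i => rfl, fun i ℓ => rfl, fun i ℓ => ?_⟩
      show (φ ℓ (.e i.castSucc) - φ ℓ (.e i.succ)) + (φ ℓ (.e i.succ) - φ ℓ (.e i.castSucc)) = 0
      ring
    exact this
  -- part (iii) surjectivity
  · intro g
    refine ⟨fun ℓ w => match ℓ, w with
      | 0, .s _ => 0
      | (ℓ+1), .s _ => g ℓ
      | ℓ, .q _ => g ℓ
      | _, .p _ => 0, ?_, ?_⟩
    · rw [part2]
      exact ⟨fun _ => rfl, fun _ _ => rfl, fun i ℓ => by simp⟩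
    · intro ℓ; simp
  -- part (iii) kernel
  · intro φ h
    obtain ⟨c1, c2, c3⟩ := (part2 φ).mp h
    constructor
    · intro h0
      -- all s values vanish
      have hs : ∀ ℓ (i : Fin (n+1)), φ ℓ (.s i) = 0 := by
        intro ℓ i
        cases ℓ with
        | zero => exact c1 i
        | succ ℓ => rw [c2 i ℓ, ← c3 ⟨0, hn⟩ ℓ, h0 ℓ]
      have hqp : ∀ ℓ (i : Fin n), φ ℓ (.q i) = - φ ℓ (.p i) := by
        intro ℓ i
        have := c3 i ℓ
        rw [hs (ℓ+1) 0] at this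
        linear_combination this
      refine ⟨fun ℓ w => match w with
        | .e j => ∑ m ∈ Finset.range j.val,
            (if hm : m < n then φ ℓ (.p ⟨m, hm⟩) else 0), ?_⟩
      funext ℓ w
      cases w with
      | s i => exact (hs ℓ i).symm
      | p i =>
        show (∑ m ∈ Finset.range (i.val+1), _) - (∑ m ∈ Finset.range i.val, _) = φ ℓ (.p i)
        rw [Finset.sum_range_succ]
        simp [i.isLt]
      | q i =>
        show (∑ m ∈ Finset.range i.val, _) - (∑ m ∈ Finset.range (i.val+1), _) = φ ℓ (.q i)
        rw [Finset.sum_range_succ, hqp]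
        simp [i.isLt]
    · rintro ⟨ψ, rfl⟩
      intro ℓ
      show (d0 n k ψ ℓ (.q ⟨0,hn⟩)) + (d0 n k ψ ℓ (.p ⟨0,hn⟩)) = 0
      show (ψ ℓ (.e _) - ψ ℓ (.e _)) + (ψ ℓ (.e _) - ψ ℓ (.e _)) = 0
      ring
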